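/- arXiv:2307.01353 — 2 statements merged into one kernel-verified Lean document; each statement's English description precedes it below -/
import Mathlib

section
/- Let B be a semisimple algebra with distinguished idempotents e₁,…,e_m, let B̃ = ⊕_{i,j} e_i B e_j be the painted algebra, and for a B-module M define the painted module M̃ = ⊕_i e_i M. Then for any simple B-module S, the painted module S̃ is either zero or a simple B̃-module. -/
open Finset

/-- Absorption: if `a` is idempotent and `a * x * b = x` then `a * x = x`. -/
theorem absorb_left {B : Type*} [Ring B] {a b x : B} (ha : a * a = a)
    (h : a * x * b = x) : a * x = x := by
  conv_lhs => rw [← h]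
  rw [← mul_assoc, ← mul_assoc, ha, h]

theorem absorb_right {B : Type*} [Ring B] {a b x : B} (hb : b * b = b)
    (h : a * x * b = x) : x * b = x := by
  conv_lhs => rw [← h]
  rw [mul_assoc (a * x) b b, hb, h]

/-- A family of distinguished idempotents in a ring `B`. -/
structure IdemFamily (B : Type*) [Ring B] (m : ℕ) where
  e : Fin m → B
  idem : ∀ i, e i * e i = e i

variable {B : Type*} [Ring B] {m : ℕ}

/-- The painted algebra `B̃ = ⊕_{i,j} e_i B e_j`, realized as the non-unital subring of
`m × m` matrices over `B` whose `(i,j)` entry lies in `e_i B e_j`.  Its multiplication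
`(e_i b e_j)·(e_k b' e_ℓ) = δ_{jk} e_i b e_j b' e_ℓ` is exactly matrix multiplication. -/
def paintedSubring (E : IdemFamily B m) : NonUnitalSubring (Matrix (Fin m) (Fin m) B) where
  carrier := {x | ∀ i j, E.e i * x i j * E.e j = x i j}
  zero_mem' := by intro i j; simp
  add_mem' := by
    intro x y hx hy i j
    have : (x + y) i j = x i j + y i j := rfl
    rw [this, mul_add, add_mul, hx i j, hy i j]
  neg_mem' := by
    intro x hx i j
    have : (-x) i j = -(x i j) := rfl
    rw [this, mul_neg, neg_mul, hx i j]
  mul_mem' := by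
    intro x y hx hy i j
    show E.e i * (x * y) i j * E.e j = (x * y) i j
    simp only [Matrix.mul_apply, Finset.mul_sum, Finset.sum_mul]
    refine Finset.sum_congr rfl fun l _ => ?_
    rw [← mul_assoc, absorb_left (E.idem i) (hx i l), mul_assoc,
      absorb_right (E.idem j) (hy l j)]

/-- The painted algebra associated to a family of idempotents. -/
def PaintedAlgebra (E : IdemFamily B m) : Type _ := ↥(paintedSubring E)

instance (E : IdemFamily B m) : NonUnitalRing (PaintedAlgebra E) :=
  inferInstanceAs (NonUnitalRing ↥(paintedSubring E))

/-- The painted algebra is a (unital) ring, with unit the diagonal matrix `diag(e₁,…,e_m)`. -/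
instance (E : IdemFamily B m) : Ring (PaintedAlgebra E) :=
  { (inferInstance : NonUnitalRing (PaintedAlgebra E)) with
    one := ⟨Matrix.diagonal E.e, by
      intro i j
      by_cases h : i = j
      · subst h; simp [Matrix.diagonal_apply_eq, E.idem i]
      · simp [Matrix.diagonal_apply_ne _ h]⟩
    one_mul := by
      intro x
      apply Subtype.ext
      ext i j
      show (Matrix.diagonal E.e * x.val) i j = x.val i j
      rw [Matrix.diagonal_mul]
      exact absorb_left (E.idem i) (x.prop i j)
    mul_one := by
      intro x
      apply Subtype.ext
      ext i j
      show (x.val * Matrix.diagonal E.e) i j = x.val i j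
      rw [Matrix.mul_diagonal]
      exact absorb_right (E.idem j) (x.prop i j) }
/-- The painted module `M̃ = ⊕_i e_i M`, realized as the additive subgroup of `Fin m → M`
consisting of tuples with `i`-th coordinate in `e_i M`. -/
def paintedSubgroup (E : IdemFamily B m) (M : Type*) [AddCommGroup M] [Module B M] :
    AddSubgroup (Fin m → M) where
  carrier := {v | ∀ i, E.e i • v i = v i}
  zero_mem' := by intro i; simp
  add_mem' := by
    intro v w hv hw i
    have : (v + w) i = v i + w i := rfl
    rw [this, smul_add, hv i, hw i]
  neg_mem' := by
    intro v hv i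
    have : (-v) i = -(v i) := rfl
    rw [this, smul_neg, hv i]

/-- The painted module associated to a `B`-module `M`. -/
def PaintedModule (E : IdemFamily B m) (M : Type*) [AddCommGroup M] [Module B M] : Type _ :=
  ↥(paintedSubgroup E M)

instance (E : IdemFamily B m) (M : Type*) [AddCommGroup M] [Module B M] :
    AddCommGroup (PaintedModule E M) :=
  inferInstanceAs (AddCommGroup ↥(paintedSubgroup E M))

instance (E : IdemFamily B m) (M : Type*) [AddCommGroup M] [Module B M] :
    SMul (PaintedAlgebra E) (PaintedModule E M) where
  smul x v := ⟨fun i => ∑ j, x.val i j • v.val j, by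
    intro i
    rw [Finset.smul_sum]
    refine Finset.sum_congr rfl fun j _ => ?_
    rw [← mul_smul, absorb_left (E.idem i) (x.prop i j)]⟩

theorem painted_smul_apply (E : IdemFamily B m) (M : Type*) [AddCommGroup M] [Module B M]
    (x : PaintedAlgebra E) (v : PaintedModule E M) (i : Fin m) :
    (x • v).val i = ∑ j, x.val i j • v.val j := rfl

/-- The painted module is a module over the painted algebra, with the action
`(e_i b e_j) • (e_k m) = δ_{jk} (e_i b e_j) • m`  (matrix–vector multiplication). -/
instance (E : IdemFamily B m) (M : Type*) [AddCommGroup M] [Module B M] :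
    Module (PaintedAlgebra E) (PaintedModule E M) where
  one_smul v := by
    apply Subtype.ext
    funext i
    rw [painted_smul_apply]
    show (∑ j, Matrix.diagonal E.e i j • v.val j) = v.val i
    rw [Finset.sum_eq_single i]
    · rw [Matrix.diagonal_apply_eq]; exact v.prop i
    · intro j _ hj
      rw [Matrix.diagonal_apply_ne _ (Ne.symm hj), zero_smul]
    · intro h; exact absurd (Finset.mem_univ i) h
  mul_smul x y v := by
    apply Subtype.ext
    funext i
    rw [painted_smul_apply]
    show (∑ j, (x.val * y.val) i j • v.val j) = ∑ j, x.val i j • (y • v).val j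
    simp only [Matrix.mul_apply, painted_smul_apply, Finset.sum_smul, Finset.smul_sum,
      mul_smul]
    exact Finset.sum_comm
  smul_zero x := by
    apply Subtype.ext
    funext i
    rw [painted_smul_apply]
    show (∑ j, x.val i j • (0 : M)) = 0
    simp
  smul_add x v w := by
    apply Subtype.ext
    funext i
    simp only [painted_smul_apply]
    show (∑ j, x.val i j • (v.val j + w.val j)) = _
    simp only [smul_add, Finset.sum_add_distrib]
    rfl
  add_smul x y v := by
    apply Subtype.ext
    funext i
    simp only [painted_smul_apply]
    show (∑ j, (x.val i j + y.val i j) • v.val j) = _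
    simp only [add_smul, Finset.sum_add_distrib]
    rfl
  zero_smul v := by
    apply Subtype.ext
    funext i
    rw [painted_smul_apply]
    show (∑ j, (0 : Matrix (Fin m) (Fin m) B) i j • v.val j) = 0
    simp

/-- Let `B` be a semisimple algebra with distinguished idempotents
`e₁,…,e_m`, and let `B̃` be the painted algebra.  For any simple `B`-module `S`, the
painted module `S̃ = ⊕_i e_i S` is either zero or a simple `B̃`-module. -/
theorem stmt5 {B : Type*} [Ring B] [IsSemisimpleRing B] {m : ℕ} (E : IdemFamily B m)
    (S : Type*) [AddCommGroup S] [Module B S] (hS : IsSimpleModule B S) :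
    (∀ v : PaintedModule E S, v = 0) ∨
      IsSimpleModule (PaintedAlgebra E) (PaintedModule E S) := by
  classical
  by_cases hz : ∀ v : PaintedModule E S, v = 0
  · exact Or.inl hz
  right
  -- key fact: in a simple module, any nonzero element generates everything
  have key : ∀ (s : S), s ≠ 0 → ∀ t : S, ∃ b : B, b • s = t := by
    intro s hs t
    have hsp : (Submodule.span B {s} : Submodule B S) = ⊤ := by
      rcases eq_bot_or_eq_top (Submodule.span B {s} : Submodule B S) with h | h
      · exact absurd (by
          have := Submodule.mem_span_singleton_self (R := B) s
          rw [h] at this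
          simpa using this) hs
      · exact h
    have : t ∈ Submodule.span B ({s} : Set S) := by rw [hsp]; trivial
    exact Submodule.mem_span_singleton.mp this
  obtain ⟨v0, hv0⟩ := not_forall.mp hz
  haveI : Nontrivial (PaintedModule E S) := ⟨v0, 0, hv0⟩
  haveI : Nontrivial (Submodule (PaintedAlgebra E) (PaintedModule E S)) :=
    ⟨⊥, ⊤, fun h => hv0 ((Submodule.mem_bot (PaintedAlgebra E)).mp (by rw [h]; trivial))⟩
  refine { toIsSimpleOrder := { toNontrivial := inferInstance, eq_bot_or_eq_top := ?_ } }
  intro N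
  by_cases hN : N = ⊥
  · exact Or.inl hN
  right
  obtain ⟨v, hvN, hv⟩ := Submodule.exists_mem_ne_zero_of_ne_bot hN
  -- find a nonzero coordinate of v
  have hvk : ∃ k, v.val k ≠ 0 := by
    by_contra h
    push_neg at h
    exact hv (Subtype.ext (funext fun i => h i))
  obtain ⟨k, hk⟩ := hvk
  rw [Submodule.eq_top_iff']
  intro w
  -- for each coordinate j choose b_j with b_j • v_k = w_j
  choose b hb using fun j => key (v.val k) hk (w.val j)
  -- the painted matrix with single entry (j,k) equal to e_j * b j * e_k
  have memx : ∀ j, (Matrix.of fun i l => if i = j ∧ l = k then E.e j * b j * E.e k else 0)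
      ∈ paintedSubring E := by
    intro j i l
    by_cases hil : i = j ∧ l = k
    · obtain ⟨hi, hl⟩ := hil
      subst hi; subst hl
      rw [Matrix.of_apply, if_pos (⟨rfl, rfl⟩ : i = i ∧ l = l)]
      rw [← mul_assoc (E.e i) (E.e i * b i) (E.e l), ← mul_assoc (E.e i) (E.e i) (b i),
        E.idem i, mul_assoc (E.e i * b i) (E.e l) (E.e l), E.idem l]
    · simp only [Matrix.of_apply, if_neg hil, mul_zero, zero_mul]
  have hxdef : ∀ j, ∃ x : PaintedAlgebra E,
      x.val = Matrix.of fun i l => if i = j ∧ l = k then E.e j * b j * E.e k else 0 :=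
    fun j => ⟨⟨_, memx j⟩, rfl⟩
  choose x hxval using hxdef
  have hxv : ∀ j, ((x j) • v).val = Pi.single j (w.val j) := by
    intro j
    funext i
    rw [painted_smul_apply, hxval j]
    simp only [Matrix.of_apply]
    by_cases hij : i = j
    · subst hij
      rw [Finset.sum_eq_single k]
      · rw [if_pos ⟨rfl, rfl⟩, mul_smul, mul_smul, v.prop k, hb i, w.prop i,
          Pi.single_eq_same]
      · intro l _ hl
        rw [if_neg (fun h => hl h.2), zero_smul]
      · intro h; exact absurd (Finset.mem_univ k) h
    · rw [Pi.single_eq_of_ne hij]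
      apply Finset.sum_eq_zero
      intro l _
      rw [if_neg (fun h => hij h.1), zero_smul]
  have hw : w = ∑ j, (x j) • v := by
    apply Subtype.ext
    have hcs : (∑ j, (x j) • v : PaintedModule E S).val
        = ∑ j, ((x j) • v).val :=
      AddSubmonoidClass.coe_finset_sum _ _
    rw [hcs]
    funext i
    rw [Finset.sum_apply]
    calc w.val i = (∑ j, Pi.single j (w.val j)) i := by rw [Finset.univ_sum_single]
      _ = ∑ j, Pi.single j (w.val j) i := Finset.sum_apply _ _ _
      _ = ∑ j, ((x j) • v).val i := Finset.sum_congr rfl fun j _ => (congrFun (hxv j) i).symm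
  rw [hw]
  exact Submodule.sum_mem N fun j _ => N.smul_mem (x j) hvN
end

section
/- Let a, b ∈ W_{r,k}, π ∈ Π_{2(r)}, and π̃ = κ_{a,b}(π). Let A^π_{a,b} be the subgroup of permutations of the barred part of π that permute whole blocks of π|_{barred}, moving a block onto another only when the blocks of π containing them have the same image under κ_{a,b}. Then |A^π_{a,b}| = m(π̃)!/m(π̃₊)!, where π̃₊ is the multiset of blocks of π̃ contained entirely in the unbarred alphabet. -/
open Finset
open scoped Classical

variable {r k : ℕ}

/-- The coloring map `κ_{a,b}` on the two-row alphabet: unbarred elements are colored by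
`f` and barred elements by `g`. -/
def colorOf (f g : Fin r → Fin k) : Fin r ⊕ Fin r → Fin k ⊕ Fin k := Sum.map f g

/-- The colored image of a single block. -/
def coloredBlock (f g : Fin r → Fin k) (B : Finset (Fin r ⊕ Fin r)) :
    Multiset (Fin k ⊕ Fin k) :=
  B.val.map (colorOf f g)

/-- The multiset partition `κ_{a,b}(π)`. -/
def coloredP (f g : Fin r → Fin k) (P : Finpartition (univ : Finset (Fin r ⊕ Fin r))) :
    Multiset (Multiset (Fin k ⊕ Fin k)) :=
  P.parts.val.map fun B => B.val.map (colorOf f g)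

/-- The barred part of a block, as a subset of `[r]`. -/
def barPart (B : Finset (Fin r ⊕ Fin r)) : Finset (Fin r) :=
  univ.filter fun i => Sum.inr i ∈ B

/-- `m(ρ̃)!` : the product over the distinct blocks of the factorial of the multiplicity. -/
noncomputable def mfact {β : Type*} (s : Multiset β) : ℕ :=
  ∏ b ∈ s.toFinset, (s.count b).factorial

/-- `π̃₊` : the blocks of a colored multiset partition contained entirely in the unbarred
(top) alphabet. -/
noncomputable def topOnly (M : Multiset (Multiset (Fin k ⊕ Fin k))) :
    Multiset (Multiset (Fin k ⊕ Fin k)) :=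
  M.filter fun Bl => ∀ x ∈ Bl, x.isLeft = true

/-! ### Auxiliary lemmas -/

section canMapSec
variable {α β : Type*} [LinearOrder α] [LinearOrder β]

lemma sortmap_eq (g : α → β) (hg : Monotone g) (s t : Finset α)
    (hm : s.val.map g = t.val.map g) :
    (s.sort (· ≤ ·)).map g = (t.sort (· ≤ ·)).map g := by
  refine (fun hp h1 h2 => List.Perm.eq_of_pairwise' (r := (· ≤ ·)) h1 h2 hp) ?_ ?_ ?_
  · apply Multiset.coe_eq_coe.mp
    rw [← Multiset.map_coe, ← Multiset.map_coe, Finset.sort_eq, Finset.sort_eq, hm]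
  · exact List.Pairwise.map g (fun a b hab => hg hab) (s.pairwise_sort (· ≤ ·))
  · exact List.Pairwise.map g (fun a b hab => hg hab) (t.pairwise_sort (· ≤ ·))

/-- The canonical monotone bijection between two finsets of equal cardinality,
extended by the identity off `s`. -/
noncomputable def canMap (s t : Finset α) (h : s.card = t.card) (x : α) : α :=
  if hx : x ∈ s then t.orderEmbOfFin h.symm ((s.orderIsoOfFin rfl).symm ⟨x, hx⟩) else x

lemma canMap_apply {s t : Finset α} (h : s.card = t.card) {x : α} (hx : x ∈ s) :
    canMap s t h x = t.orderEmbOfFin h.symm ((s.orderIsoOfFin rfl).symm ⟨x, hx⟩) := by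
  simp [canMap, hx]

lemma canMap_mem {s t : Finset α} (h : s.card = t.card) {x : α} (hx : x ∈ s) :
    canMap s t h x ∈ t := by
  rw [canMap_apply h hx]; exact Finset.orderEmbOfFin_mem _ _ _

/-- Any monotone injection of `s` onto `t` agrees with `canMap` on `s`. -/
lemma canMap_unique [DecidableEq α] {s t : Finset α} (h : s.card = t.card) {φ : α → α}
    (hmono : MonotoneOn φ s) (hinj : Set.InjOn φ s) (himg : s.image φ = t)
    {x : α} (hx : x ∈ s) : φ x = canMap s t h x := by
  have hsm : StrictMonoOn φ s := fun x hx y hy hxy =>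
    lt_of_le_of_ne (hmono hx hy hxy.le) fun he => hxy.ne (hinj hx hy he)
  set F : Fin s.card → α := fun i => φ (s.orderEmbOfFin rfl i) with hF
  have hFs : StrictMono F := fun i j hij =>
    hsm (Finset.orderEmbOfFin_mem _ _ _) (Finset.orderEmbOfFin_mem _ _ _)
      ((s.orderEmbOfFin rfl).strictMono hij)
  have hFt : ∀ i, F i ∈ t := fun i => himg ▸ Finset.mem_image_of_mem φ
    (Finset.orderEmbOfFin_mem _ _ _)
  have hFe : F = t.orderEmbOfFin h.symm := Finset.orderEmbOfFin_unique h.symm hFt hFs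
  have hx' : s.orderEmbOfFin rfl ((s.orderIsoOfFin rfl).symm ⟨x, hx⟩) = x := by
    have h2 := congrArg Subtype.val ((s.orderIsoOfFin rfl).apply_symm_apply ⟨x, hx⟩)
    rwa [Finset.coe_orderIsoOfFin_apply] at h2
  rw [canMap_apply h hx, ← hFe, hF]
  simp [hx']

lemma canMap_monotoneOn {s t : Finset α} (h : s.card = t.card) :
    MonotoneOn (canMap s t h) s := by
  intro x hx y hy hxy
  rw [canMap_apply h hx, canMap_apply h hy]
  apply (t.orderEmbOfFin h.symm).monotone
  exact (s.orderIsoOfFin rfl).symm.monotone (a := ⟨x, hx⟩) (b := ⟨y, hy⟩) hxy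

lemma canMap_injOn {s t : Finset α} (h : s.card = t.card) :
    Set.InjOn (canMap s t h) s := by
  intro x hx y hy hxy
  rw [canMap_apply h hx, canMap_apply h hy] at hxy
  have := (s.orderIsoOfFin rfl).symm.injective
    ((t.orderEmbOfFin h.symm).injective hxy)
  simpa using congrArg Subtype.val this

lemma canMap_image [DecidableEq α] {s t : Finset α} (h : s.card = t.card) :
    s.image (canMap s t h) = t := by
  apply Finset.eq_of_subset_of_card_le
  · intro y hy
    rcases Finset.mem_image.mp hy with ⟨x, hx, rfl⟩
    exact canMap_mem h hx
  · rw [Finset.card_image_of_injOn (canMap_injOn h), h]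

lemma canMap_g {g : α → β} (hg : Monotone g) {s t : Finset α} (h : s.card = t.card)
    (hm : s.val.map g = t.val.map g) {x : α} (hx : x ∈ s) :
    g (canMap s t h x) = g x := by
  set i := (s.orderIsoOfFin rfl).symm ⟨x, hx⟩ with hi
  have hx' : s.orderEmbOfFin rfl i = x := by
    have h2 := congrArg Subtype.val ((s.orderIsoOfFin rfl).apply_symm_apply ⟨x, hx⟩)
    rwa [Finset.coe_orderIsoOfFin_apply] at h2
  have hlt : (i : ℕ) < (t.sort (· ≤ ·)).length := by
    rw [Finset.length_sort]; exact h ▸ i.2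
  have hlt' : (i : ℕ) < (s.sort (· ≤ ·)).length := by
    rw [Finset.length_sort]; exact i.2
  have e1 : canMap s t h x = (t.sort (· ≤ ·))[(i : ℕ)] := by
    rw [canMap_apply h hx, ← hi, Finset.orderEmbOfFin_apply]; simp [Fin.getElem_fin]
  have e2 : x = (s.sort (· ≤ ·))[(i : ℕ)] := by
    rw [← hx', Finset.orderEmbOfFin_apply]; simp [Fin.getElem_fin]
  have e3 := sortmap_eq g hg s t hm
  calc g (canMap s t h x) = ((t.sort (· ≤ ·)).map g)[(i : ℕ)]'(by simpa using hlt) := by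
        rw [e1, List.getElem_map]
    _ = ((s.sort (· ≤ ·)).map g)[(i : ℕ)]'(by simpa using hlt') := by
        simp only [e3]
    _ = g x := by rw [List.getElem_map, ← e2]

end canMapSec

section permCount
variable {γ δ : Type*} [Fintype γ]

noncomputable def permFiberEquiv (c : γ → δ) :
    {σ : Equiv.Perm γ // c ∘ σ = c} ≃
      ((b : (univ.image c : Finset δ)) → Equiv.Perm {a // c a = b.1}) where
  toFun σ b := Equiv.ofBijective
    (fun a => ⟨σ.1 a.1, by rw [show c (σ.1 a.1) = c a.1 from congrFun σ.2 a.1, a.2]⟩)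
    (by
      rw [← Finite.injective_iff_bijective]
      intro a a' h
      exact Subtype.ext (σ.1.injective (congrArg Subtype.val h)))
  invFun F := by
    have key : ∀ (b b' : {x // x ∈ univ.image c}), b = b' →
        ∀ (x : {v // c v = b.1}) (x' : {v // c v = b'.1}),
        (x : γ) = x' → ((F b x : γ)) = F b' x' := by
      rintro b b' rfl x x' hxx
      cases Subtype.ext hxx
      rfl
    refine ⟨Equiv.ofBijective
      (fun a => (F ⟨c a, mem_image_of_mem c (mem_univ a)⟩ ⟨a, rfl⟩).1) ?_, ?_⟩
    · rw [← Finite.injective_iff_bijective]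
      intro a a' h
      simp only at h
      have e1 : c ((F ⟨c a, mem_image_of_mem c (mem_univ a)⟩ ⟨a, rfl⟩).1) = c a :=
        (F ⟨c a, mem_image_of_mem c (mem_univ a)⟩ ⟨a, rfl⟩).2
      have e2 : c ((F ⟨c a', mem_image_of_mem c (mem_univ a')⟩ ⟨a', rfl⟩).1) = c a' :=
        (F ⟨c a', mem_image_of_mem c (mem_univ a')⟩ ⟨a', rfl⟩).2
      have hc : c a = c a' := e1.symm.trans ((congrArg c h).trans e2)
      have h2 : ((F ⟨c a', mem_image_of_mem c (mem_univ a')⟩ ⟨a', rfl⟩ : γ)) =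
          F ⟨c a, mem_image_of_mem c (mem_univ a)⟩ ⟨a', hc.symm⟩ :=
        key _ _ (Subtype.ext hc.symm) _ _ rfl
      have h3 := (F ⟨c a, mem_image_of_mem c (mem_univ a)⟩).injective
        (Subtype.ext (h.trans h2))
      exact congrArg Subtype.val h3
    · funext a
      exact (F ⟨c a, mem_image_of_mem c (mem_univ a)⟩ ⟨a, rfl⟩).2
  left_inv σ := by
    apply Subtype.ext; apply Equiv.ext; intro a; rfl
  right_inv F := by
    funext b
    apply Equiv.ext; intro a
    apply Subtype.ext
    show (F ⟨c a.1, _⟩ ⟨a.1, rfl⟩).1 = (F b a).1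
    exact (fun b b' hbb x x' hxx => by
      cases hbb; cases Subtype.ext hxx; rfl :
      ∀ (b b' : {x // x ∈ univ.image c}), b = b' →
        ∀ (x : {v // c v = b.1}) (x' : {v // c v = b'.1}),
        (x : γ) = x' → ((F b x : γ)) = F b' x') _ _ (Subtype.ext a.2.symm).symm _ _ rfl

lemma card_perm_comp (c : γ → δ) :
    Nat.card {σ : Equiv.Perm γ // c ∘ σ = c} = mfact ((univ : Finset γ).val.map c) := by
  rw [Nat.card_congr (permFiberEquiv c), Nat.card_pi, mfact]
  have h1 : ((univ : Finset γ).val.map c).toFinset = univ.image c := by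
    ext b; simp [Multiset.mem_toFinset, Finset.mem_image, Multiset.mem_map]
  rw [h1, ← Finset.prod_attach (univ.image c)
    (fun b => ((((univ : Finset γ).val.map c)).count b).factorial), Finset.univ_eq_attach]
  apply Finset.prod_congr rfl
  intro b _
  rw [Nat.card_eq_fintype_card, Fintype.card_perm, Fintype.card_subtype]
  congr 1
  rw [Multiset.count_map, Finset.card_filter]
  simp [eq_comm]
  rfl

end permCount

lemma mfact_filter_mul {β : Type*} (s : Multiset β) (p : β → Prop) [DecidablePred p] :
    mfact (s.filter (fun b => ¬ p b)) * mfact (s.filter p) = mfact s := by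
  have key : ∀ (q : β → Prop) (_ : DecidablePred q),
      mfact (s.filter q) = ∏ b ∈ s.toFinset.filter q, (s.count b).factorial := by
    intro q _
    rw [mfact]
    have h1 : (s.filter q).toFinset = s.toFinset.filter q := by
      ext b; simp [Multiset.mem_toFinset, Multiset.mem_filter, Finset.mem_filter, and_comm]
    rw [h1]
    apply Finset.prod_congr rfl
    intro b hb
    rw [Multiset.count_filter]
    simp only [Finset.mem_filter] at hb
    rw [if_pos hb.2]
  rw [key p _, key (fun b => ¬ p b) _, mfact, mul_comm]
  exact Finset.prod_filter_mul_prod_filter_not s.toFinset p (fun b => (s.count b).factorial)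

section barPartLemmas
variable (f g : Fin r → Fin k)

lemma mem_barPart {B : Finset (Fin r ⊕ Fin r)} {i : Fin r} :
    i ∈ barPart B ↔ Sum.inr i ∈ B := by
  simp [barPart]

lemma barPart_val_map_g (B : Finset (Fin r ⊕ Fin r)) :
    (barPart B).val.map g = (coloredBlock f g B).filterMap Sum.getRight? := by
  have step1 : (barPart B).val = B.val.filterMap Sum.getRight? := by
    have hn1 : (barPart B).val.Nodup := (barPart B).nodup
    have hn2 : (B.val.filterMap Sum.getRight?).Nodup :=
      Multiset.Nodup.filterMap _ (fun a a' b hb hb' => by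
        cases a <;> cases a' <;> simp_all) B.nodup
    rw [Multiset.Nodup.ext hn1 hn2]
    intro i
    simp only [Multiset.mem_filterMap]
    constructor
    · intro hi
      exact ⟨Sum.inr i, (mem_barPart).mp hi, rfl⟩
    · rintro ⟨x, hx, hxi⟩
      cases x with
      | inl a => simp at hxi
      | inr j => simp at hxi; subst hxi; exact (mem_barPart).mpr hx
  rw [step1, coloredBlock, Multiset.filterMap_map, Multiset.map_filterMap]
  congr 1
  funext x
  cases x <;> simp [colorOf]

lemma gval_eq_of_coloredBlock_eq {B C : Finset (Fin r ⊕ Fin r)}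
    (h : coloredBlock f g B = coloredBlock f g C) :
    (barPart B).val.map g = (barPart C).val.map g := by
  rw [barPart_val_map_g f g, barPart_val_map_g f g, h]

lemma card_barPart_eq_of_coloredBlock_eq {B C : Finset (Fin r ⊕ Fin r)}
    (h : coloredBlock f g B = coloredBlock f g C) :
    (barPart B).card = (barPart C).card := by
  have h2 := congrArg Multiset.card (gval_eq_of_coloredBlock_eq f g h)
  rw [Multiset.card_map, Multiset.card_map] at h2
  exact h2

lemma hasRight_iff (B : Finset (Fin r ⊕ Fin r)) :
    (¬ ∀ x ∈ coloredBlock f g B, x.isLeft = true) ↔ (barPart B).Nonempty := by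
  rw [Finset.Nonempty]
  constructor
  · intro h
    push_neg at h
    obtain ⟨x, hx, hleft⟩ := h
    rw [coloredBlock, Multiset.mem_map] at hx
    obtain ⟨y, hy, rfl⟩ := hx
    cases y with
    | inl a => simp [colorOf] at hleft
    | inr i => exact ⟨i, (mem_barPart).mpr hy⟩
  · rintro ⟨i, hi⟩ hall
    have hmem : Sum.inr i ∈ B := (mem_barPart).mp hi
    have := hall (Sum.inr (g i))
      (Multiset.mem_map.mpr ⟨Sum.inr i, hmem, rfl⟩)
    simp at this

end barPartLemmas

section main
variable (f g : Fin r → Fin k) (P : Finpartition (univ : Finset (Fin r ⊕ Fin r)))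

/-- The index type of blocks of `π` with nonempty barred part. -/
abbrev Idx := {B : Finset (Fin r ⊕ Fin r) // B ∈ P.parts ∧ (barPart B).Nonempty}

/-- The colored block of an indexed block. -/
def cIdx : Idx P → Multiset (Fin k ⊕ Fin k) := fun B => coloredBlock f g B.1

lemma exists_blk (i : Fin r) : ∃ B, B ∈ P.parts ∧ Sum.inr i ∈ B := by
  obtain ⟨B, hB, hi⟩ := P.exists_mem (mem_univ (Sum.inr i))
  exact ⟨B, hB, hi⟩

/-- The block containing the barred element `i`. -/
noncomputable def blk (i : Fin r) : Idx P :=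
  ⟨(exists_blk P i).choose, (exists_blk P i).choose_spec.1,
    ⟨i, mem_barPart.mpr (exists_blk P i).choose_spec.2⟩⟩

lemma mem_blk (i : Fin r) : Sum.inr i ∈ (blk P i).1 := (exists_blk P i).choose_spec.2

lemma blk_eq {B : Idx P} {i : Fin r} (h : Sum.inr i ∈ B.1) : blk P i = B :=
  Subtype.ext (P.eq_of_mem_parts (blk P i).2.1 B.2.1 (mem_blk P i) h)

lemma barPart_inj {B C : Finset (Fin r ⊕ Fin r)} (hB : B ∈ P.parts) (hC : C ∈ P.parts)
    (hne : (barPart B).Nonempty) (h : barPart B = barPart C) : B = C := by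
  obtain ⟨i, hi⟩ := hne
  exact P.eq_of_mem_parts hB hC (mem_barPart.mp hi) (mem_barPart.mp (h ▸ hi))

/-- The conditions defining the subgroup `A^π_{a,b}`. -/
def acond (σ : Equiv.Perm (Fin r)) : Prop :=
  (g ∘ ⇑σ = g) ∧
  (∀ B ∈ P.parts, (barPart B).Nonempty →
    ∃ C ∈ P.parts, (barPart B).image ⇑σ = barPart C ∧ MonotoneOn ⇑σ ↑(barPart B)) ∧
  (∀ B ∈ P.parts, ∀ C ∈ P.parts, (barPart C).Nonempty →
    (barPart C).image ⇑σ = barPart B →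
    coloredBlock f g B = coloredBlock f g C)

/-- The permutation of indexed blocks induced by `σ`. -/
noncomputable def tau0 (σ : Equiv.Perm (Fin r))
    (h2 : ∀ B ∈ P.parts, (barPart B).Nonempty →
      ∃ C ∈ P.parts, (barPart B).image ⇑σ = barPart C ∧ MonotoneOn ⇑σ ↑(barPart B))
    (B : Idx P) : Idx P :=
  ⟨(h2 B.1 B.2.1 B.2.2).choose, (h2 B.1 B.2.1 B.2.2).choose_spec.1, by
    rw [← (h2 B.1 B.2.1 B.2.2).choose_spec.2.1]
    exact B.2.2.image ⇑σ⟩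

lemma tau0_spec (σ : Equiv.Perm (Fin r)) (h2 : _) (B : Idx P) :
    (barPart B.1).image ⇑σ = barPart (tau0 P σ h2 B).1 :=
  (h2 B.1 B.2.1 B.2.2).choose_spec.2.1

lemma tau0_inj (σ : Equiv.Perm (Fin r)) (h2 : _) :
    Function.Injective (tau0 P σ h2) := by
  intro B B' h
  have himg : (barPart B.1).image ⇑σ = (barPart B'.1).image ⇑σ := by
    rw [tau0_spec P σ h2 B, tau0_spec P σ h2 B', h]
  have hbp : barPart B.1 = barPart B'.1 :=
    Finset.image_injective σ.injective himg
  exact Subtype.ext (barPart_inj P B.2.1 B'.2.1 B.2.2 hbp)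

/-- The forward map from `A^π_{a,b}` to color-preserving permutations of indexed
blocks. -/
noncomputable def fwd (σ : {σ : Equiv.Perm (Fin r) // acond f g P σ}) :
    {τ : Equiv.Perm (Idx P) // cIdx f g P ∘ ⇑τ = cIdx f g P} :=
  ⟨Equiv.ofBijective (tau0 P σ.1 σ.2.2.1)
      ((Finite.injective_iff_bijective).mp (tau0_inj P σ.1 σ.2.2.1)),
    funext fun B =>
      σ.2.2.2 (tau0 P σ.1 σ.2.2.1 B).1 (tau0 P σ.1 σ.2.2.1 B).2.1 B.1 B.2.1 B.2.2
        (tau0_spec P σ.1 σ.2.2.1 B)⟩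

end main
section main2
variable (f g : Fin r → Fin k) (P : Finpartition (univ : Finset (Fin r ⊕ Fin r)))

lemma fwd_injective (hf : Monotone f) (hg : Monotone g) :
    Function.Injective (fwd f g P) := by
  intro σ σ' h
  apply Subtype.ext
  apply Equiv.ext
  intro i
  set B := blk P i with hB
  have hiB : i ∈ barPart B.1 := mem_barPart.mpr (mem_blk P i)
  have htau : tau0 P σ.1 σ.2.2.1 B = tau0 P σ'.1 σ'.2.2.1 B := by
    have h1 := congrArg Subtype.val h
    exact DFunLike.congr_fun h1 B
  set t := barPart (tau0 P σ.1 σ.2.2.1 B).1 with ht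
  have himg : (barPart B.1).image ⇑σ.1 = t := tau0_spec P σ.1 σ.2.2.1 B
  have himg' : (barPart B.1).image ⇑σ'.1 = t := by
    rw [ht, htau]; exact tau0_spec P σ'.1 σ'.2.2.1 B
  have hcard : (barPart B.1).card = t.card := by
    rw [← himg, Finset.card_image_of_injective _ σ.1.injective]
  obtain ⟨C, hC, hCimg, hCmono⟩ := σ.2.2.1 B.1 B.2.1 B.2.2
  obtain ⟨C', hC', hCimg', hCmono'⟩ := σ'.2.2.1 B.1 B.2.1 B.2.2
  have e1 : σ.1 i = canMap (barPart B.1) t hcard i :=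
    canMap_unique hcard hCmono (σ.1.injective.injOn) himg hiB
  have e2 : σ'.1 i = canMap (barPart B.1) t hcard i :=
    canMap_unique hcard hCmono' (σ'.1.injective.injOn) himg' hiB
  rw [e1, e2]

lemma fwd_surjective (hf : Monotone f) (hg : Monotone g) :
    Function.Surjective (fwd f g P) := by
  rintro ⟨τ, hτ⟩
  -- cardinalities of corresponding barred parts agree
  have hcb : ∀ B : Idx P, coloredBlock f g (τ B).1 = coloredBlock f g B.1 :=
    fun B => congrFun hτ B
  have hcard : ∀ B : Idx P, (barPart B.1).card = (barPart (τ B).1).card :=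
    fun B => card_barPart_eq_of_coloredBlock_eq f g (hcb B).symm
  -- the candidate permutation, block by block
  set σ0 : Fin r → Fin r :=
    fun i => canMap (barPart (blk P i).1) (barPart (τ (blk P i)).1) (hcard (blk P i)) i
    with hσ0
  have hmem0 : ∀ i : Fin r, i ∈ barPart (blk P i).1 :=
    fun i => mem_barPart.mpr (mem_blk P i)
  have key : ∀ (B : Idx P), ∀ i ∈ barPart B.1,
      σ0 i = canMap (barPart B.1) (barPart (τ B).1) (hcard B) i := by
    intro B i hi
    have hb : blk P i = B := blk_eq P (mem_barPart.mp hi)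
    rw [hσ0]
    simp only [hb]
  have himg : ∀ B : Idx P, (barPart B.1).image σ0 = barPart (τ B).1 := by
    intro B
    rw [Finset.image_congr (fun i hi => key B i hi)]
    exact canMap_image (hcard B)
  have hbij : Function.Bijective σ0 := by
    constructor
    · intro i j hij
      have h1 : σ0 i ∈ barPart (τ (blk P i)).1 := by
        rw [key (blk P i) i (hmem0 i)]; exact canMap_mem _ (hmem0 i)
      have h2 : σ0 j ∈ barPart (τ (blk P j)).1 := by
        rw [key (blk P j) j (hmem0 j)]; exact canMap_mem _ (hmem0 j)
      rw [hij] at h1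
      have : (τ (blk P i)) = (τ (blk P j)) := by
        apply Subtype.ext
        exact P.eq_of_mem_parts (τ (blk P i)).2.1 (τ (blk P j)).2.1
          (mem_barPart.mp h1) (mem_barPart.mp h2)
      have hb : blk P i = blk P j := τ.injective this
      have := canMap_injOn (hcard (blk P i))
        (by exact_mod_cast hmem0 i) (by rw [hb]; exact_mod_cast hmem0 j)
      apply this
      rw [← key (blk P i) i (hmem0 i)]
      conv_rhs => rw [hb]
      rw [← key (blk P j) j (hmem0 j)]
      exact hij
    · intro j
      set C := blk P j with hC
      set B := τ.symm C with hB
      have hτB : τ B = C := τ.apply_symm_apply C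
      have : j ∈ barPart (τ B).1 := by rw [hτB]; exact hmem0 j
      rw [← himg B] at this
      obtain ⟨i, hi, hij⟩ := Finset.mem_image.mp this
      exact ⟨i, hij⟩
  set σ : Equiv.Perm (Fin r) := Equiv.ofBijective σ0 hbij with hσ
  have hσcoe : ⇑σ = σ0 := rfl
  -- σ satisfies the three conditions
  have hc1 : g ∘ ⇑σ = g := by
    funext i
    have := canMap_g hg (hcard (blk P i))
      (gval_eq_of_coloredBlock_eq f g (hcb (blk P i)).symm) (hmem0 i)
    exact this
  have hc2 : ∀ B ∈ P.parts, (barPart B).Nonempty →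
      ∃ C ∈ P.parts, (barPart B).image ⇑σ = barPart C ∧ MonotoneOn ⇑σ ↑(barPart B) := by
    intro B hB hne
    set B' : Idx P := ⟨B, hB, hne⟩ with hB'
    refine ⟨(τ B').1, (τ B').2.1, by rw [hσcoe]; exact himg B', ?_⟩
    rw [hσcoe]
    apply (canMap_monotoneOn (hcard B')).congr
    intro i hi
    exact (key B' i (by exact_mod_cast hi)).symm
  have hc3 : ∀ B ∈ P.parts, ∀ C ∈ P.parts, (barPart C).Nonempty →
      (barPart C).image ⇑σ = barPart B → coloredBlock f g B = coloredBlock f g C := by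
    intro B hB C hC hne himgBC
    set C' : Idx P := ⟨C, hC, hne⟩ with hC'
    have h1 : barPart B = barPart (τ C').1 := by
      rw [← himgBC, hσcoe, himg C']
    have hne2 : (barPart B).Nonempty := by
      rw [← himgBC]; exact hne.image _
    have hBeq : B = (τ C').1 := barPart_inj P hB (τ C').2.1 hne2 h1
    rw [hBeq]
    exact hcb C'
  refine ⟨⟨σ, hc1, hc2, hc3⟩, ?_⟩
  apply Subtype.ext
  apply Equiv.ext
  intro B
  -- both are blocks of P with the same barred part
  show tau0 P σ hc2 B = τ B
  apply Subtype.ext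
  apply barPart_inj P (tau0 P σ hc2 B).2.1 (τ B).2.1 (tau0 P σ hc2 B).2.2
  rw [← tau0_spec P σ hc2 B, hσcoe, himg B]

end main2
section final
variable (f g : Fin r → Fin k) (P : Finpartition (univ : Finset (Fin r ⊕ Fin r)))

lemma idx_map_eq :
    (univ : Finset (Idx P)).val.map (cIdx f g P) =
      (coloredP f g P).filter (fun Bl => ¬ ∀ x ∈ Bl, x.isLeft = true) := by
  have h0 : (univ : Finset (Idx P)).val.map Subtype.val
      = (P.parts.filter (fun B => (barPart B).Nonempty)).val := by
    have hn1 : ((univ : Finset (Idx P)).val.map Subtype.val).Nodup :=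
      Multiset.Nodup.map Subtype.val_injective univ.nodup
    rw [Multiset.Nodup.ext hn1 (P.parts.filter _).nodup]
    intro B
    constructor
    · intro hB
      obtain ⟨b, _, rfl⟩ := Multiset.mem_map.mp hB
      simpa [Finset.mem_filter] using And.intro b.2.1 b.2.2
    · intro hB
      have hB' : B ∈ P.parts.filter (fun B => (barPart B).Nonempty) := hB
      rw [Finset.mem_filter] at hB'
      replace hB := hB'
      exact Multiset.mem_map.mpr ⟨⟨B, hB.1, hB.2⟩, Finset.mem_univ_val _, rfl⟩
  have h1 : (univ : Finset (Idx P)).val.map (cIdx f g P)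
      = ((univ : Finset (Idx P)).val.map Subtype.val).map (coloredBlock f g) := by
    rw [Multiset.map_map]; rfl
  rw [h1, h0, Finset.filter_val]
  have h2 : coloredP f g P = P.parts.val.map (coloredBlock f g) := rfl
  rw [h2, Multiset.filter_map]
  congr 1
  apply Multiset.filter_congr
  intro B _
  exact (hasRight_iff f g B).symm

theorem stmt15' (hf : Monotone f) (hg : Monotone g) :
    Nat.card {σ : Equiv.Perm (Fin r) // acond f g P σ} *
      mfact (topOnly (coloredP f g P))
      = mfact (coloredP f g P) := by
  have hbij : Function.Bijective (fwd f g P) :=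
    ⟨fwd_injective f g P hf hg, fwd_surjective f g P hf hg⟩
  rw [Nat.card_congr (Equiv.ofBijective _ hbij), card_perm_comp (cIdx f g P),
    idx_map_eq f g P, topOnly]
  exact mfact_filter_mul (coloredP f g P) (fun Bl => ∀ x ∈ Bl, x.isLeft = true)

end final

/-- Let `a, b ∈ W_{r,k}` (encoded by their monotone coloring maps
`f, g`), `π ∈ Π_{2(r)}` and `π̃ = κ_{a,b}(π)`.  The subgroup `A^π_{a,b}`, consisting of
the permutations `σ ∈ S_b` of the barred alphabet that permute whole blocks of the
restriction `π|_{barred}` order-preservingly, moving a barred block onto another only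
when the blocks of `π` containing them have the same image under `κ_{a,b}`, has
cardinality `m(π̃)!/m(π̃₊)!`. -/
theorem stmt15 (f g : Fin r → Fin k) (hf : Monotone f) (hg : Monotone g)
    (P : Finpartition (univ : Finset (Fin r ⊕ Fin r))) :
    Nat.card {σ : Equiv.Perm (Fin r) //
        (g ∘ ⇑σ = g) ∧
        (∀ B ∈ P.parts, (barPart B).Nonempty →
          ∃ C ∈ P.parts, (barPart B).image ⇑σ = barPart C ∧ MonotoneOn ⇑σ ↑(barPart B)) ∧
        (∀ B ∈ P.parts, ∀ C ∈ P.parts, (barPart C).Nonempty →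
          (barPart C).image ⇑σ = barPart B →
          coloredBlock f g B = coloredBlock f g C)} *
      mfact (topOnly (coloredP f g P))
      = mfact (coloredP f g P) := by
  exact stmt15' f g P hf hg
end
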